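/- There exists a polynomial map p = (p_1,…,p_n): ℂ → ℂ^n such that for every ζ with |ζ| = 1 and every j = 1,…,n, p_j(ζ) = ζ^{k_0} · Σ_{ℓ=1}^{d} c_ℓ · P_{ℓ,z_j}((1−ζ)V, (1−conj ζ)·conj V). (This is the key fact showing that the disc f₀(ζ) = ((1−ζ)V, g₀(ζ)) admits a k₀-stationary lift for the model M_H: the boundary map ζ ↦ ζ^{k_0} Σ_ℓ c_ℓ ∂ρ_ℓ(f₀(ζ), conj f₀(ζ)) extends holomorphically through the unit disc.) -/

import Mathlib

open ComplexConjugate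

noncomputable section

lemma pderiv_support_subset' {σ R : Type*} [CommSemiring R] [DecidableEq σ]
    (i : σ) (P : MvPolynomial σ R) (μ : σ →₀ ℕ)
    (hμ : μ ∈ (MvPolynomial.pderiv i P).support) :
    ∃ ν ∈ P.support, μ = ν - Finsupp.single i 1 := by
  have hrw : MvPolynomial.pderiv i P =
      ∑ ν ∈ P.support, MvPolynomial.monomial (ν - Finsupp.single i 1)
        (MvPolynomial.coeff ν P * ν i) := by
    conv_lhs => rw [P.as_sum]
    rw [map_sum]
    exact Finset.sum_congr rfl fun ν _ => MvPolynomial.pderiv_monomial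
  rw [hrw] at hμ
  have := MvPolynomial.support_sum hμ
  simp only [Finset.mem_biUnion] at this
  obtain ⟨ν, hν, hmem⟩ := this
  have := MvPolynomial.support_monomial_subset hmem
  simp only [Finset.mem_singleton] at this
  exact ⟨ν, hν, this⟩

theorem stmt10
    (n d : ℕ) (hn : 1 ≤ n) (hd : 1 ≤ d)
    (D k : Fin d → ℕ) (k0 : ℕ)
    (hD1 : 2 ≤ D ⟨0, hd⟩) (hD1le : ∀ ℓ, D ⟨0, hd⟩ ≤ D ℓ)
    (hklow : ∀ ℓ, D ℓ ≤ 2 * k ℓ) (hkhigh : ∀ ℓ, k ℓ ≤ D ℓ - 1)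
    (hk0 : ∀ ℓ, k ℓ ≤ k0) (hk0mem : ∃ ℓ, k ℓ = k0)
    (P : Fin d → MvPolynomial (Fin n ⊕ Fin n) ℂ)
    (hsupp : ∀ ℓ, ∀ μ ∈ (P ℓ).support,
      ((∑ i, μ (Sum.inl i)) + (∑ i, μ (Sum.inr i)) = D ℓ ∧
        D ℓ - k ℓ ≤ ∑ i, μ (Sum.inl i)) ∧ (∑ i, μ (Sum.inl i)) ≤ k ℓ)
    (hreal : ∀ ℓ μ, MvPolynomial.coeff μ (P ℓ) =
      conj (MvPolynomial.coeff
        (Finsupp.equivMapDomain (Equiv.sumComm (Fin n) (Fin n)) μ) (P ℓ)))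
    (c : Fin d → ℝ) (V : Fin n → ℂ) (hV : V ≠ 0) :
    ∃ p : Fin n → Polynomial ℂ,
      ∀ ζ : ℂ, ‖ζ‖ = 1 → ∀ j : Fin n,
        (p j).eval ζ =
          ζ ^ k0 * ∑ ℓ, (c ℓ : ℂ) *
            MvPolynomial.eval
              (Sum.elim (fun q => (1 - ζ) * V q)
                (fun q => (1 - conj ζ) * conj (V q)))
              (MvPolynomial.pderiv (Sum.inl j) (P ℓ)) := by
  classical
  set A : ((Fin n ⊕ Fin n) →₀ ℕ) → ℕ := fun μ => ∑ i, μ (Sum.inl i) with hA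
  set B : ((Fin n ⊕ Fin n) →₀ ℕ) → ℕ := fun μ => ∑ i, μ (Sum.inr i) with hB
  refine ⟨fun j => ∑ ℓ, ∑ μ ∈ (MvPolynomial.pderiv (Sum.inl j) (P ℓ)).support,
    Polynomial.C ((c ℓ : ℂ) * MvPolynomial.coeff μ (MvPolynomial.pderiv (Sum.inl j) (P ℓ)) *
      (∏ i, V i ^ μ (Sum.inl i)) * (∏ i, conj (V i) ^ μ (Sum.inr i)) * (-1) ^ (B μ)) *
      Polynomial.X ^ (k0 - B μ) * (1 - Polynomial.X) ^ (A μ + B μ), ?_⟩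
  intro ζ hζ j
  have hζ0 : ζ ≠ 0 := by
    intro h; rw [h] at hζ; simp at hζ
  have hconj : (1 - conj ζ) * ζ = -(1 - ζ) := by
    have hmc : ζ * conj ζ = 1 := by
      simp [Complex.mul_conj, Complex.normSq_eq_norm_sq, hζ]
    linear_combination -hmc
  simp only [Polynomial.eval_finset_sum, Polynomial.eval_mul, Polynomial.eval_pow,
    Polynomial.eval_C, Polynomial.eval_X, Polynomial.eval_sub, Polynomial.eval_one]
  rw [Finset.mul_sum]
  refine Finset.sum_congr rfl fun ℓ _ => ?_
  rw [MvPolynomial.eval_eq', Finset.mul_sum, Finset.mul_sum]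
  refine Finset.sum_congr rfl fun μ hμ => ?_
  -- bound B μ ≤ k0
  obtain ⟨ν, hν, hμν⟩ := pderiv_support_subset' (Sum.inl j) (P ℓ) μ hμ
  have hBμν : B μ = B ν := by
    rw [hμν]
    refine Finset.sum_congr rfl fun i _ => ?_
    rw [Finsupp.tsub_apply, Finsupp.single_eq_of_ne (by simp)]
    simp
  have hBk : B μ ≤ k0 := by
    obtain ⟨⟨hsum, hlow⟩, hhigh⟩ := hsupp ℓ ν hν
    have h1 : A ν + B ν = D ℓ := hsum
    have h2 : D ℓ - k ℓ ≤ A ν := hlow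
    have h3 : k ℓ ≤ k0 := hk0 ℓ
    rw [hBμν]
    omega
  -- split product over sum type
  rw [Fintype.prod_sum_type]
  simp only [Sum.elim_inl, Sum.elim_inr, mul_pow, Finset.prod_mul_distrib,
    Finset.prod_pow_eq_pow_sum]
  -- key identity
  have key : ζ ^ k0 * ((1 - ζ) ^ (A μ) * (1 - conj ζ) ^ (B μ)) =
      (-1 : ℂ) ^ (B μ) * ζ ^ (k0 - B μ) * (1 - ζ) ^ (A μ + B μ) := by
    have h1 : (1 - conj ζ) ^ (B μ) * ζ ^ (B μ) = (-1 : ℂ) ^ (B μ) * (1 - ζ) ^ (B μ) := by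
      rw [← mul_pow, hconj, neg_eq_neg_one_mul, mul_pow]
    have h2 : ζ ^ k0 = ζ ^ (k0 - B μ) * ζ ^ (B μ) := by
      rw [← pow_add, Nat.sub_add_cancel hBk]
    rw [h2, pow_add]
    linear_combination ζ ^ (k0 - B μ) * (1 - ζ) ^ (A μ) * h1
  linear_combination -((c ℓ : ℂ) * MvPolynomial.coeff μ (MvPolynomial.pderiv (Sum.inl j) (P ℓ)) *
    (∏ i, V i ^ μ (Sum.inl i)) * (∏ i, conj (V i) ^ μ (Sum.inr i))) * key
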